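/- Let E and F be Banach spaces, S ∈ L(E,F), 0 < p < ∞, and M > 0, and suppose the entropy numbers of S satisfy Σ_{n=1}^∞ e_n(S)ᵖ ≤ Mᵖ. Then S(B_E) is totally bounded and for every ε > 0 the ε-capacity satisfies H_ε(S(B_E)) ≤ Mᵖ/εᵖ. -/
import Mathlib

open NormedSpace Metric

noncomputable section

universe u v

def entropyNumber {E F : Type*} [NormedAddCommGroup E] [NormedSpace ℂ E]
    [NormedAddCommGroup F] [NormedSpace ℂ F] (n : ℕ) (S : E →L[ℂ] F) : ℝ :=
  sInf {δ : ℝ | 0 < δ ∧ ∃ (q : ℕ) (y : Fin q → F), q ≤ 2 ^ (n - 1) ∧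
    S '' closedBall 0 1 ⊆ ⋃ i, closedBall (y i) δ}

def CoveredBy {F : Type*} [NormedAddCommGroup F] (A : Set F) (m : ℕ) (ε : ℝ) : Prop :=
  ∃ E : Fin m → Set F, A ⊆ ⋃ i, E i ∧ ∀ i, EMetric.diam (E i) ≤ ENNReal.ofReal (2 * ε)

lemma entropySet_nonempty {E F : Type*} [NormedAddCommGroup E] [NormedSpace ℂ E]
    [NormedAddCommGroup F] [NormedSpace ℂ F] (n : ℕ) (S : E →L[ℂ] F) :
    {δ : ℝ | 0 < δ ∧ ∃ (q : ℕ) (y : Fin q → F), q ≤ 2 ^ (n - 1) ∧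
    S '' closedBall 0 1 ⊆ ⋃ i, closedBall (y i) δ}.Nonempty := by
  refine ⟨‖S‖ + 1, ⟨by positivity, 1, fun _ => 0, Nat.one_le_two_pow, ?_⟩⟩
  rintro z ⟨x, hx, rfl⟩
  refine Set.mem_iUnion.2 ⟨0, ?_⟩
  simp only [mem_closedBall, dist_zero_right]
  calc ‖S x‖ ≤ ‖S‖ * ‖x‖ := S.le_opNorm x
    _ ≤ ‖S‖ * 1 := by
        have : ‖x‖ ≤ 1 := by simpa using mem_closedBall_zero_iff.1 hx
        exact mul_le_mul_of_nonneg_left this (norm_nonneg S)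
    _ ≤ ‖S‖ + 1 := by linarith [norm_nonneg S]

lemma entropyNumber_nonneg {E F : Type*} [NormedAddCommGroup E] [NormedSpace ℂ E]
    [NormedAddCommGroup F] [NormedSpace ℂ F] (n : ℕ) (S : E →L[ℂ] F) :
    0 ≤ entropyNumber n S :=
  Real.sInf_nonneg (fun _ hx => hx.1.le)

/-- Key covering lemma -/
lemma cover_of_entropy {E : Type u} [NormedAddCommGroup E] [NormedSpace ℂ E]
    {F : Type v} [NormedAddCommGroup F] [NormedSpace ℂ F]
    (S : E →L[ℂ] F) (p : ℝ) (hp : 0 < p) (M : ℝ) (hM : 0 < M)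
    (hsum : Summable (fun n : ℕ => entropyNumber (n + 1) S ^ p))
    (hle : (∑' n : ℕ, entropyNumber (n + 1) S ^ p) ≤ M ^ p)
    (ε : ℝ) (hε : 0 < ε) :
    ∃ (k q : ℕ) (y : Fin q → F) (δ : ℝ), (k : ℝ) ≤ M ^ p / ε ^ p ∧ q ≤ 2 ^ k ∧
      0 < δ ∧ δ < ε ∧ S '' closedBall 0 1 ⊆ ⋃ i, closedBall (y i) δ := by
  classical
  have P : ∃ n : ℕ, entropyNumber (n + 1) S < ε := by
    have h0 := hsum.tendsto_atTop_zero
    rw [Metric.tendsto_atTop] at h0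
    obtain ⟨N, hN⟩ := h0 (ε ^ p) (Real.rpow_pos_of_pos hε p)
    refine ⟨N, ?_⟩
    by_contra hcon
    push_neg at hcon
    have h1 : ε ^ p ≤ entropyNumber (N + 1) S ^ p :=
      Real.rpow_le_rpow hε.le hcon hp.le
    have h2 := hN N le_rfl
    rw [dist_zero_right, Real.norm_eq_abs,
      abs_of_nonneg (Real.rpow_nonneg (entropyNumber_nonneg _ _) p)] at h2
    linarith
  let k := Nat.find P
  have hk : entropyNumber (k + 1) S < ε := Nat.find_spec P
  have hk' : ∀ j < k, ε ≤ entropyNumber (j + 1) S := fun j hj =>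
    le_of_not_gt (Nat.find_min P hj)
  -- k ≤ M^p / ε^p
  have hkbound : (k : ℝ) ≤ M ^ p / ε ^ p := by
    have hsle : (k : ℝ) * ε ^ p ≤ ∑ j ∈ Finset.range k, entropyNumber (j + 1) S ^ p := by
      calc (k : ℝ) * ε ^ p = ∑ _j ∈ Finset.range k, ε ^ p := by
            simp [Finset.sum_const, mul_comm]
        _ ≤ _ := Finset.sum_le_sum (fun j hj =>
            Real.rpow_le_rpow hε.le (hk' j (Finset.mem_range.1 hj)) hp.le)
    have htsum : ∑ j ∈ Finset.range k, entropyNumber (j + 1) S ^ p ≤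
        ∑' n : ℕ, entropyNumber (n + 1) S ^ p :=
      Summable.sum_le_tsum _ (fun i _ => Real.rpow_nonneg (entropyNumber_nonneg _ _) p) hsum
    rw [le_div_iff₀ (Real.rpow_pos_of_pos hε p)]
    linarith
  obtain ⟨δ, hδmem, hδlt⟩ := exists_lt_of_csInf_lt (entropySet_nonempty (k + 1) S) hk
  obtain ⟨hδpos, q, y, hq, hcov⟩ := hδmem
  exact ⟨k, q, y, δ, hkbound, by simpa using hq, hδpos, hδlt, hcov⟩

/-- If the entropy numbers of `S` satisfy `∑_{n≥1} e_n(S)ᵖ ≤ Mᵖ`, then `S(B_E)` is totally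
bounded and its `ε`-capacity satisfies `H_ε(S(B_E)) ≤ Mᵖ/εᵖ` for every `ε > 0`. -/
theorem capacity_le_of_entropy_summable
    {E : Type u} [NormedAddCommGroup E] [NormedSpace ℂ E]
    {F : Type v} [NormedAddCommGroup F] [NormedSpace ℂ F]
    (S : E →L[ℂ] F) (p : ℝ) (hp : 0 < p) (M : ℝ) (hM : 0 < M)
    (hsum : Summable (fun n : ℕ => entropyNumber (n + 1) S ^ p))
    (hle : (∑' n : ℕ, entropyNumber (n + 1) S ^ p) ≤ M ^ p) :
    TotallyBounded (S '' closedBall 0 1) ∧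
    ∀ ε > (0 : ℝ), ∃ m : ℕ,
      CoveredBy (S '' closedBall 0 1) m ε ∧
      Real.logb 2 m ≤ M ^ p / ε ^ p := by
  constructor
  · rw [Metric.totallyBounded_iff]
    intro ε hε
    obtain ⟨k, q, y, δ, _, _, hδpos, hδlt, hcov⟩ :=
      cover_of_entropy S p hp M hM hsum hle ε hε
    refine ⟨Set.range y, Set.finite_range y, ?_⟩
    refine hcov.trans ?_
    intro z hz
    obtain ⟨i, hi⟩ := Set.mem_iUnion.1 hz
    exact Set.mem_biUnion (Set.mem_range_self i)
      (lt_of_le_of_lt (mem_closedBall.1 hi) hδlt)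
  · intro ε hε
    obtain ⟨k, q, y, δ, hkb, hq, hδpos, hδlt, hcov⟩ :=
      cover_of_entropy S p hp M hM hsum hle ε hε
    refine ⟨q, ⟨fun i => closedBall (y i) δ, hcov, fun i => ?_⟩, ?_⟩
    · refine EMetric.diam_le ?_
      intro a ha b hb
      rw [edist_dist]
      refine ENNReal.ofReal_le_ofReal ?_
      have h1 : dist a b ≤ dist a (y i) + dist (y i) b := dist_triangle _ _ _
      have h2 : dist a (y i) ≤ δ := mem_closedBall.1 ha
      have h3 : dist (y i) b ≤ δ := by
        rw [dist_comm]; exact mem_closedBall.1 hb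
      linarith
    · rcases Nat.eq_zero_or_pos q with hq0 | hq1
      · subst hq0
        simp only [Nat.cast_zero, Real.logb_zero]
        positivity
      · have h1 : Real.logb 2 q ≤ Real.logb 2 (2 ^ k : ℕ) :=
          Real.logb_le_logb_of_le (by norm_num) (by exact_mod_cast hq1)
            (by exact_mod_cast hq)
        refine h1.trans ?_
        rw [Nat.cast_pow, Nat.cast_ofNat, Real.logb_pow,
          Real.logb_self_eq_one (by norm_num)]
        simpa using hkb

end
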